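/- Let $H_{n-1},H_n,H_{n+1},r_n,\beta_n,R_{n-1},R_n$ (functions of $t$) satisfy: $tR_n=H_n-H_{n+1}$, $tR_{n-1}=H_{n-1}-H_n$, $H_n=n(n+\alpha+\gamma)+tr_n-\beta_n$, and $\beta_nR_{n-1}+\beta_nR_n=\beta_n-(2n+\alpha+\gamma)r_n-n(n+\alpha)$. If $2n+\alpha+\gamma-t+H_{n-1}-H_{n+1}\ne 0$, then $tr_n=\frac{n\gamma t-tH_n-[n(n+\alpha+\gamma)-H_n](H_{n-1}-H_{n+1})}{2n+\alpha+\gamma-t+H_{n-1}-H_{n+1}}$ and $\beta_n=\frac{n\gamma t+n(n+\alpha+\gamma)(2n+\alpha+\gamma-t)-(2n+\alpha+\gamma)H_n}{2n+\alpha+\gamma-t+H_{n-1}-H_{n+1}}$. -/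
import Mathlib


/-- Solving the linear system for `t r_n` and `β_n` in terms of `H_{n-1}, H_n, H_{n+1}`. -/
theorem stmt_18 (n : ℕ) (hn : 1 ≤ n) (α γ t : ℝ) (ht : 0 < t)
    (Hm H Hp rn βn Rnm1 Rn : ℝ)
    (h1 : t * Rn = H - Hp)
    (h2 : t * Rnm1 = Hm - H)
    (h3 : H = n * (n + α + γ) + t * rn - βn)
    (h4 : βn * Rnm1 + βn * Rn = βn - (2 * n + α + γ) * rn - n * (n + α))
    (hden : 2 * n + α + γ - t + Hm - Hp ≠ 0) :
    t * rn = (n * γ * t - t * H - (n * (n + α + γ) - H) * (Hm - Hp))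
        / (2 * n + α + γ - t + Hm - Hp) ∧
    βn = (n * γ * t + n * (n + α + γ) * (2 * n + α + γ - t) - (2 * n + α + γ) * H)
        / (2 * n + α + γ - t + Hm - Hp) := by
  constructor
  · rw [eq_div_iff hden]
    linear_combination t * h4 + (-βn) * h1 + (-βn) * h2 + (t - Hm + Hp) * h3
  · rw [eq_div_iff hden]
    linear_combination t * h4 + (-βn) * h1 + (-βn) * h2 + (2 * n + α + γ) * h3
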